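/- Let X be an n×p real matrix with linearly independent columns, Y ∈ ℝⁿ, let C be a p×s real matrix (s < p) with linearly independent columns, and t ∈ ℝ^s. Let β̂ = (XᵀX)⁻¹XᵀY be the least squares estimator, let τ̂ = Cᵀβ̂ − t, and define β* = β̂ − (XᵀX)⁻¹ C (Cᵀ(XᵀX)⁻¹C)⁻¹ τ̂. Then Cᵀβ* = t, and for every β ∈ ℝ^p with Cᵀβ = t one has ‖Y − Xβ*‖² ≤ ‖Y − Xβ‖²; that is, β* minimizes the residual sum of squares R(β) = (Y − Xβ)ᵀ(Y − Xβ) subject to the restriction Cᵀβ − t = 0. -/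

import Mathlib

open Matrix

lemma aux_posdef {m k : ℕ} (B : Matrix (Fin m) (Fin k) ℝ)
    (hB : Function.Injective B.mulVec) (P : Matrix (Fin m) (Fin m) ℝ)
    (hP : P.PosDef) : (Bᵀ * P * B).PosDef := by
  rw [posDef_iff_dotProduct_mulVec]
  constructor
  · have h := hP.isHermitian
    simp only [IsHermitian, conjTranspose_eq_transpose_of_trivial] at h ⊢
    rw [transpose_mul, transpose_mul, transpose_transpose, h, Matrix.mul_assoc]
  · intro x hx
    have hBx : B *ᵥ x ≠ 0 := by
      intro h
      exact hx (hB (by simpa using h))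
    have := hP.dotProduct_mulVec_pos hBx
    simpa [Matrix.mul_assoc, ← mulVec_mulVec, dotProduct_mulVec, vecMul_transpose] using this

lemma posdef_XtX {n p : ℕ} (X : Matrix (Fin n) (Fin p) ℝ)
    (hX : LinearIndependent ℝ (fun j : Fin p => Xᵀ j)) : (Xᵀ * X).PosDef := by
  have := aux_posdef X (Matrix.mulVec_injective_iff.mpr hX) 1 Matrix.PosDef.one
  simpa using this

/-- The restricted least squares estimator
`β* = β̂ − (XᵀX)⁻¹ C (Cᵀ(XᵀX)⁻¹C)⁻¹ τ̂` (with `τ̂ = Cᵀβ̂ − t`) satisfies the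
restriction `Cᵀβ* = t` and minimizes the residual sum of squares
`R(β) = (Y − Xβ)ᵀ(Y − Xβ)` over all `β` with `Cᵀβ = t`. -/
theorem stmt2 (n p s : ℕ) (hs : 0 < s) (hsp : s < p)
    (X : Matrix (Fin n) (Fin p) ℝ)
    (hX : LinearIndependent ℝ (fun j : Fin p => Xᵀ j))
    (Y : Fin n → ℝ)
    (C : Matrix (Fin p) (Fin s) ℝ)
    (hC : LinearIndependent ℝ (fun j : Fin s => Cᵀ j))
    (t : Fin s → ℝ)
    (βhat : Fin p → ℝ) (hβhat : βhat = ((Xᵀ * X)⁻¹ * Xᵀ) *ᵥ Y)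
    (τhat : Fin s → ℝ) (hτhat : τhat = Cᵀ *ᵥ βhat - t)
    (βstar : Fin p → ℝ)
    (hβstar : βstar = βhat - ((Xᵀ * X)⁻¹ * C * (Cᵀ * (Xᵀ * X)⁻¹ * C)⁻¹) *ᵥ τhat) :
    Cᵀ *ᵥ βstar = t ∧
      ∀ β : Fin p → ℝ, Cᵀ *ᵥ β = t →
        (Y - X *ᵥ βstar) ⬝ᵥ (Y - X *ᵥ βstar) ≤ (Y - X *ᵥ β) ⬝ᵥ (Y - X *ᵥ β) := by
  set A := Xᵀ * X with hAdef
  have hA : A.PosDef := posdef_XtX X hX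
  have hAH : Aᵀ = A := by
    have := hA.isHermitian
    simpa [IsHermitian, conjTranspose_eq_transpose_of_trivial] using this
  have : Invertible A := hA.isUnit.invertible
  have hM : (Cᵀ * A⁻¹ * C).PosDef := by
    have := aux_posdef C (Matrix.mulVec_injective_iff.mpr hC) A⁻¹ hA.inv
    exact this
  set M := Cᵀ * A⁻¹ * C with hMdef
  have : Invertible M := hM.isUnit.invertible
  -- Cᵀ dstar = τhat
  have hCd : ∀ v : Fin s → ℝ, Cᵀ *ᵥ ((A⁻¹ * C * M⁻¹) *ᵥ v) = v := by
    intro v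
    rw [mulVec_mulVec, ← Matrix.mul_assoc, ← Matrix.mul_assoc, hMdef]
    rw [Matrix.mul_nonsing_inv _ (isUnit_iff_isUnit_det _ |>.mp hM.isUnit), one_mulVec]
  have part1 : Cᵀ *ᵥ βstar = t := by
    rw [hβstar, mulVec_sub, hCd, hτhat, sub_sub_cancel]
  refine ⟨part1, ?_⟩
  -- orthogonality
  have horth : Xᵀ *ᵥ (Y - X *ᵥ βhat) = 0 := by
    have hx : Xᵀ * X * (A⁻¹ * Xᵀ) = Xᵀ := by
      rw [← hAdef, ← Matrix.mul_assoc, Matrix.mul_nonsing_inv _ (isUnit_iff_isUnit_det _ |>.mp hA.isUnit),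
        Matrix.one_mul]
    rw [hβhat, mulVec_sub, mulVec_mulVec, mulVec_mulVec, hx, sub_self]
  -- residual decomposition
  have hdecomp : ∀ b : Fin p → ℝ,
      (Y - X *ᵥ b) ⬝ᵥ (Y - X *ᵥ b)
        = (Y - X *ᵥ βhat) ⬝ᵥ (Y - X *ᵥ βhat) + (βhat - b) ⬝ᵥ (A *ᵥ (βhat - b)) := by
    intro b
    have h1 : Y - X *ᵥ b = (Y - X *ᵥ βhat) + X *ᵥ (βhat - b) := by
      rw [mulVec_sub]; abel
    have h2 : (Y - X *ᵥ βhat) ⬝ᵥ (X *ᵥ (βhat - b)) = 0 := by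
      rw [dotProduct_mulVec, ← mulVec_transpose, horth, zero_dotProduct]
    have h3 : (X *ᵥ (βhat - b)) ⬝ᵥ (Y - X *ᵥ βhat) = 0 := by
      rw [dotProduct_comm]; exact h2
    have h4 : (βhat - b) ⬝ᵥ (A *ᵥ (βhat - b)) = (X *ᵥ (βhat - b)) ⬝ᵥ (X *ᵥ (βhat - b)) := by
      rw [hAdef, ← mulVec_mulVec, dotProduct_mulVec, vecMul_transpose]
    rw [h1, add_dotProduct, dotProduct_add, dotProduct_add, h2, h3, ← h4]
    ring
  intro β hβ
  rw [hdecomp βstar, hdecomp β]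
  apply add_le_add_right
  -- quadratic comparison
  set dstar : Fin p → ℝ := (A⁻¹ * C * M⁻¹) *ᵥ τhat with hdstar
  have hds : βhat - βstar = dstar := by rw [hβstar, sub_sub_cancel]
  set e : Fin p → ℝ := (βhat - β) - dstar with he
  have hCe : Cᵀ *ᵥ e = 0 := by
    rw [he, mulVec_sub, mulVec_sub, hCd, hτhat, hβ, sub_self]
  have hAds : A *ᵥ dstar = (C * M⁻¹) *ᵥ τhat := by
    rw [hdstar, mulVec_mulVec, ← Matrix.mul_assoc, ← Matrix.mul_assoc,
      Matrix.mul_nonsing_inv _ (isUnit_iff_isUnit_det _ |>.mp hA.isUnit), Matrix.one_mul]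
  have hcross : e ⬝ᵥ (A *ᵥ dstar) = 0 := by
    rw [hAds, ← mulVec_mulVec, dotProduct_mulVec, ← mulVec_transpose, hCe, zero_dotProduct]
  have hcross2 : dstar ⬝ᵥ (A *ᵥ e) = 0 := by
    rw [dotProduct_mulVec, ← hAH, vecMul_transpose, dotProduct_comm]
    exact hcross
  have hnn : 0 ≤ e ⬝ᵥ (A *ᵥ e) := by
    have := hA.posSemidef.dotProduct_mulVec_nonneg e
    simpa using this
  have hexp : βhat - β = dstar + e := by rw [he]; abel
  rw [hds, hexp, mulVec_add, add_dotProduct, dotProduct_add, dotProduct_add, hcross, hcross2]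
  linarith
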